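/- For all ε > 0 and α > 1, the quantity (1/(α−1)) · log( (sinh(αε) − sinh((α−1)ε)) / sinh(ε) ) is at most ε, i.e., the RDP parameter of an ε-DP mechanism of any order α never exceeds ε. -/

import Mathlib

/-- For all `ε > 0` and `α > 1`, the tight RDP parameter of a pure `ε`-DP mechanism,
`(1/(α−1)) log((sinh(αε) − sinh((α−1)ε))/sinh(ε))`, never exceeds `ε`. -/
theorem rdp_parameter_le_eps (ε α : ℝ) (hε : 0 < ε) (hα : 1 < α) :
    (α - 1)⁻¹ *
      Real.log ((Real.sinh (α * ε) - Real.sinh ((α - 1) * ε)) / Real.sinh ε) ≤ ε := by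
  have hα1 : 0 < α - 1 := by linarith
  have hs : 0 < Real.sinh ε := Real.sinh_pos_iff.2 hε
  have hlt : (α - 1) * ε < α * ε := by nlinarith
  have hnum : 0 < Real.sinh (α * ε) - Real.sinh ((α - 1) * ε) :=
    sub_pos.2 (Real.sinh_lt_sinh.2 hlt)
  have hx : 0 < (Real.sinh (α * ε) - Real.sinh ((α - 1) * ε)) / Real.sinh ε :=
    div_pos hnum hs
  rw [inv_mul_le_iff₀ hα1, Real.log_le_iff_le_exp hx]
  · rw [div_le_iff₀ hs]
    have key : Real.sinh (α * ε) - Real.sinh ((α - 1) * ε) ≤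
        Real.exp ((α - 1) * ε) * Real.sinh ε := by
      rw [Real.sinh_eq, Real.sinh_eq, Real.sinh_eq]
      have hab : Real.exp (α * ε) = Real.exp ((α - 1) * ε) * Real.exp ε := by
        rw [← Real.exp_add]; ring_nf
      have hb : 1 < Real.exp ((α - 1) * ε) := Real.one_lt_exp_iff.2 (by positivity)
      have he : 1 < Real.exp ε := Real.one_lt_exp_iff.2 hε
      have h1 : Real.exp (-(α * ε)) = (Real.exp (α * ε))⁻¹ := Real.exp_neg _
      have h2 : Real.exp (-((α - 1) * ε)) = (Real.exp ((α - 1) * ε))⁻¹ := Real.exp_neg _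
      have h3 : Real.exp (-ε) = (Real.exp ε)⁻¹ := Real.exp_neg _
      set b := Real.exp ((α - 1) * ε)
      set e := Real.exp ε
      have hb0 : (0:ℝ) < b := by linarith
      have he0 : (0:ℝ) < e := by linarith
      rw [h1, h2, h3, hab]
      have hkey : (0:ℝ) ≤ (b^2 - 1) * (e - 1) :=
        mul_nonneg (by nlinarith) (by linarith)
      rw [div_sub_div_same, div_le_iff₀ (by norm_num : (0:ℝ) < 2)] <;> try skip
      field_simp
      nlinarith [mul_pos hb0 he0, mul_pos (mul_pos hb0 hb0) he0, hkey,
        mul_nonneg (mul_nonneg hb0.le hb0.le) hkey]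
    linarith
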